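/- Let f : (a, b) → ℝ be strictly increasing and absolutely continuous on compact subintervals, and suppose the set {r ∈ (a,b) : f'(r) = 0} has Lebesgue measure zero. Then the inverse function f⁻¹ : (f(a+), f(b-)) → (a, b) is also strictly increasing and absolutely continuous on compact subintervals. -/

import Mathlib

open MeasureTheory Set Filter
open scoped ENNReal Topology Interval

private lemma aux_ae_deriv (c d : ℝ) (φ F : ℝ → ℝ) (hφ : IntegrableOn φ (Icc c d))
    (hF : ∀ x ∈ Icc c d, ∀ y ∈ Icc c d, x ≤ y → F y - F x = ∫ t in x..y, φ t) :
    ∀ᵐ x, x ∈ Ioo c d → HasDerivAt F (φ x) x := by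
  set ψ : ℝ → ℝ := (Icc c d).indicator φ with hψ
  have hψint : Integrable ψ := (integrable_indicator_iff measurableSet_Icc).2 hφ
  have key := IsUnifLocDoublingMeasure.ae_tendsto_average_norm_sub
    (μ := (volume : Measure ℝ)) hψint.locallyIntegrable 1
  filter_upwards [key] with x hx hxI
  have havg : Tendsto (fun y : ℝ => ⨍ t in Metric.closedBall x |y - x|, ‖ψ t - ψ x‖)
      (𝓝[≠] x) (𝓝 0) := by
    apply hx (fun _ => x) (fun y => |y - x|)
    · rw [tendsto_nhdsWithin_iff]
      constructor
      · have : Tendsto (fun y : ℝ => |y - x|) (𝓝 x) (𝓝 |x - x|) :=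
          (continuous_abs.comp (continuous_id.sub continuous_const)).continuousAt
        simpa using this.mono_left nhdsWithin_le_nhds
      · filter_upwards [self_mem_nhdsWithin] with y hy
        exact abs_pos.2 (sub_ne_zero.2 hy)
    · filter_upwards with y
      simp [abs_nonneg]
  rw [hasDerivAt_iff_tendsto_slope, tendsto_iff_norm_sub_tendsto_zero]
  have hxIcc : x ∈ Icc c d := Ioo_subset_Icc_self hxI
  have hψx : ψ x = φ x := indicator_of_mem hxIcc φ
  have hFint : ∀ y ∈ Ioo c d, F y - F x = ∫ t in x..y, φ t := by
    intro y hy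
    rcases le_total x y with h | h
    · exact hF x hxIcc y (Ioo_subset_Icc_self hy) h
    · rw [intervalIntegral.integral_symm]
      have := hF y (Ioo_subset_Icc_self hy) x hxIcc h
      linarith [this]
  have hbound : ∀ᶠ y in 𝓝[≠] x, ‖slope F x y - φ x‖ ≤
      2 * ⨍ t in Metric.closedBall x |y - x|, ‖ψ t - ψ x‖ := by
    filter_upwards [nhdsWithin_le_nhds (isOpen_Ioo.mem_nhds hxI), self_mem_nhdsWithin]
      with y hy (hyx : y ≠ x)
    have hyx' : y - x ≠ 0 := sub_ne_zero.2 hyx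
    have habs : (0:ℝ) < |y - x| := abs_pos.2 hyx'
    have hsub : Ι x y ⊆ Metric.closedBall x |y - x| := by
      intro t ht
      rw [Metric.mem_closedBall, Real.dist_eq]
      rcases mem_uIoc.1 ht with ⟨h1, h2⟩ | ⟨h1, h2⟩
      · rw [abs_of_pos (by linarith), abs_of_nonneg (by linarith)]; linarith
      · rw [abs_of_nonpos (by linarith)]
        calc -(t - x) ≤ x - y := by linarith
        _ ≤ |y - x| := by rw [abs_sub_comm]; exact le_abs_self _
    have hsub2 : Ι x y ⊆ Icc c d := by
      apply Set.Subset.trans _ (Ioo_subset_Icc_self : Ioo c d ⊆ _)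
      rw [uIoc_eq_union]
      rcases hxI with ⟨h1, h2⟩; rcases hy with ⟨h3, h4⟩
      rintro t (ht | ht) <;> exact ⟨by rcases ht with ⟨u, v⟩; linarith, by rcases ht with ⟨u, v⟩; linarith⟩
    have hint : IntegrableOn (fun t => ‖ψ t - ψ x‖) (Metric.closedBall x |y - x|) :=
      ((hψint.integrableOn.sub
        (integrableOn_const measure_closedBall_lt_top.ne)).norm)
    have e1 : F y - F x = ∫ t in x..y, φ t := hFint y hy
    have e2 : slope F x y - φ x = (y - x)⁻¹ * ∫ t in x..y, (φ t - φ x) := by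
      rw [slope_def_field]
      have hintx : IntervalIntegrable φ volume x y :=
        intervalIntegrable_iff.2 (hφ.mono_set hsub2)
      rw [intervalIntegral.integral_sub hintx (intervalIntegrable_const),
        intervalIntegral.integral_const, ← e1, smul_eq_mul, mul_sub, mul_comm]
      field_simp
    rw [e2]
    have e3 : ‖(y - x)⁻¹ * ∫ t in x..y, (φ t - φ x)‖ ≤
        |y - x|⁻¹ * ∫ t in Ι x y, ‖φ t - φ x‖ := by
      rw [norm_mul, norm_inv, Real.norm_eq_abs]
      exact mul_le_mul_of_nonneg_left
        (intervalIntegral.norm_integral_le_integral_norm_uIoc) (by positivity)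
    have e4 : ∫ t in Ι x y, ‖φ t - φ x‖ = ∫ t in Ι x y, ‖ψ t - ψ x‖ := by
      apply setIntegral_congr_fun measurableSet_uIoc
      intro t ht
      simp only [hψ, indicator_of_mem (hsub2 ht), indicator_of_mem hxIcc]
    have e5 : ∫ t in Ι x y, ‖ψ t - ψ x‖ ≤
        ∫ t in Metric.closedBall x |y - x|, ‖ψ t - ψ x‖ :=
      setIntegral_mono_set hint
        (Filter.Eventually.of_forall fun t => norm_nonneg _)
        (HasSubset.Subset.eventuallyLE hsub)
    have e6 : ⨍ t in Metric.closedBall x |y - x|, ‖ψ t - ψ x‖ =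
        (2 * |y - x|)⁻¹ * ∫ t in Metric.closedBall x |y - x|, ‖ψ t - ψ x‖ := by
      rw [setAverage_eq, Real.volume_real_closedBall (abs_nonneg _), smul_eq_mul]
    rw [e6]
    calc ‖(y - x)⁻¹ * ∫ t in x..y, (φ t - φ x)‖
        ≤ |y - x|⁻¹ * ∫ t in Ι x y, ‖φ t - φ x‖ := e3
      _ ≤ |y - x|⁻¹ * ∫ t in Metric.closedBall x |y - x|, ‖ψ t - ψ x‖ := by
          rw [e4]; exact mul_le_mul_of_nonneg_left e5 (by positivity)
      _ = 2 * ((2 * |y - x|)⁻¹ * ∫ t in Metric.closedBall x |y - x|, ‖ψ t - ψ x‖) := by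
          field_simp
  have : Tendsto (fun y : ℝ => 2 * ⨍ t in Metric.closedBall x |y - x|, ‖ψ t - ψ x‖)
      (𝓝[≠] x) (𝓝 0) := by simpa using havg.const_mul 2
  exact squeeze_zero' (by filter_upwards with y using norm_nonneg _) hbound this

/-- If `f : (a,b) → ℝ` is strictly increasing, absolutely continuous on compact
subintervals (expressed as being the indefinite integral of its derivative `f'`),
and `{f' = 0}` has Lebesgue measure zero, then the inverse function is strictly
increasing and absolutely continuous on compact subintervals of the image. -/
theorem stmt_3 (a b : ℝ) (hab : a < b) (f f' : ℝ → ℝ)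
    (hmono : StrictMonoOn f (Ioo a b))
    (hcont : ContinuousOn f (Ioo a b))
    (hloc : ∀ x ∈ Ioo a b, ∀ y ∈ Ioo a b, x ≤ y → IntegrableOn f' (Icc x y))
    (hAC : ∀ x ∈ Ioo a b, ∀ y ∈ Ioo a b, x ≤ y → f y - f x = ∫ t in x..y, f' t)
    (hzero : volume {r ∈ Ioo a b | f' r = 0} = 0) :
    ∃ g g' : ℝ → ℝ,
      (∀ x ∈ Ioo a b, g (f x) = x) ∧
      StrictMonoOn g (f '' Ioo a b) ∧
      ∀ u ∈ f '' Ioo a b, ∀ v ∈ f '' Ioo a b, u ≤ v →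
        IntegrableOn g' (Icc u v) ∧ g v - g u = ∫ t in u..v, g' t := by
  have hinj : InjOn f (Ioo a b) := hmono.injOn
  set g : ℝ → ℝ := Function.invFunOn f (Ioo a b) with hg
  have hginv : ∀ x ∈ Ioo a b, g (f x) = x := fun x hx => hinj.leftInvOn_invFunOn hx
  have hmeas : AEMeasurable f (volume.restrict (Ioo a b)) :=
    hcont.aemeasurable measurableSet_Ioo
  set ν : Measure ℝ := (volume.restrict (Ioo a b)).map f with hν
  have hνapp : ∀ s : Set ℝ, MeasurableSet s → ν s = volume (f ⁻¹' s ∩ Ioo a b) := by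
    intro s hs
    rw [hν, Measure.map_apply_of_aemeasurable hmeas hs,
      Measure.restrict_apply' measurableSet_Ioo]
  have hfin : IsFiniteMeasure ν := by
    constructor
    rw [hνapp univ MeasurableSet.univ]
    simp only [preimage_univ, univ_inter, Real.volume_Ioo]
    exact ENNReal.ofReal_lt_top
  -- the key absolute continuity
  have hac : ν ≪ (volume : Measure ℝ) := by
    refine Measure.AbsolutelyContinuous.mk ?_
    intro s hs hs0
    rw [hνapp s hs]
    obtain ⟨ft, hftmeas, hfteq⟩ := hmeas
    have hZ1' : volume ({x | f x ≠ ft x} ∩ Ioo a b) = 0 := by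
      rw [← Measure.restrict_apply' measurableSet_Ioo]
      exact ae_iff.1 hfteq
    have claim : ∀ c ∈ Ioo a b, ∀ d ∈ Ioo a b, volume (f ⁻¹' s ∩ Icc c d) = 0 := by
      intro c hc d hd
      rcases le_or_gt c d with hcd | hcd
      · -- the real case
        set c' := (a + c) / 2 with hc'def
        set d' := (d + b) / 2 with hd'def
        have hc'I : c' ∈ Ioo a b := ⟨by simp only [hc'def]; linarith [hc.1], by simp only [hc'def]; linarith [hc.2, hd.2, hcd]⟩
        have hd'I : d' ∈ Ioo a b := ⟨by simp only [hd'def]; linarith [hc.1, hd.1, hcd], by simp only [hd'def]; linarith [hd.2]⟩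
        have hc'd' : c' ≤ d' := by simp only [hc'def, hd'def]; linarith [hc.1, hd.2, hcd]
        have hsubIoo : Icc c d ⊆ Ioo c' d' := fun z hz =>
          ⟨by simp only [hc'def]; linarith [hc.1, hz.1], by simp only [hd'def]; linarith [hd.2, hz.2]⟩
        have hsubIcc : Icc c' d' ⊆ Ioo a b := fun z hz =>
          ⟨lt_of_lt_of_le hc'I.1 hz.1, lt_of_le_of_lt hz.2 hd'I.2⟩
        have hderiv := aux_ae_deriv c' d' f' f (hloc c' hc'I d' hd'I hc'd')
          (fun x hx y hy hxy => hAC x (hsubIcc hx) y (hsubIcc hy) hxy)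
        obtain ⟨q, hqmeas, hqeq⟩ := (hloc c' hc'I d' hd'I hc'd').aestronglyMeasurable
        have hZ4' : volume ({x | f' x ≠ q x} ∩ Icc c' d') = 0 := by
          rw [← Measure.restrict_apply' measurableSet_Icc]
          exact ae_iff.1 hqeq
        set Z1 := toMeasurable volume ({x | f x ≠ ft x} ∩ Ioo a b) with hZ1def
        set Z2 := toMeasurable volume {x | ¬ (x ∈ Ioo c' d' → HasDerivAt f (f' x) x)} with hZ2def
        set Z3 := toMeasurable volume {r ∈ Ioo a b | f' r = 0} with hZ3def
        set Z4 := toMeasurable volume ({x | f' x ≠ q x} ∩ Icc c' d') with hZ4def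
        have hZ1 : volume Z1 = 0 := by rw [hZ1def, measure_toMeasurable]; exact hZ1'
        have hZ2 : volume Z2 = 0 := by rw [hZ2def, measure_toMeasurable]; exact ae_iff.1 hderiv
        have hZ3 : volume Z3 = 0 := by rw [hZ3def, measure_toMeasurable]; exact hzero
        have hZ4 : volume Z4 = 0 := by rw [hZ4def, measure_toMeasurable]; exact hZ4'
        set s₀ := (ft ⁻¹' s ∩ Icc c d) \ (Z1 ∪ Z2 ∪ Z3 ∪ Z4) with hs₀def
        have hs₀meas : MeasurableSet s₀ :=
          ((hftmeas hs).inter measurableSet_Icc).diff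
            ((((measurableSet_toMeasurable _ _).union (measurableSet_toMeasurable _ _)).union
              (measurableSet_toMeasurable _ _)).union (measurableSet_toMeasurable _ _))
        have hs₀Icc : s₀ ⊆ Icc c d := fun x hx => hx.1.2
        have hs₀Ioo : s₀ ⊆ Ioo a b := fun x hx => hsubIcc (Ioo_subset_Icc_self (hsubIoo hx.1.2))
        have hfft : ∀ x ∈ s₀, f x = ft x := by
          intro x hx
          by_contra h
          exact hx.2 (Or.inl (Or.inl (Or.inl (subset_toMeasurable _ _ ⟨h, hs₀Ioo hx⟩))))
        have hq : ∀ x ∈ s₀, f' x = q x := by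
          intro x hx
          by_contra h
          exact hx.2 (Or.inr (subset_toMeasurable _ _ ⟨h, Ioo_subset_Icc_self (hsubIoo hx.1.2)⟩))
        have hqne : ∀ x ∈ s₀, q x ≠ 0 := by
          intro x hx h
          refine hx.2 (Or.inl (Or.inr (subset_toMeasurable _ _ ⟨hs₀Ioo hx, ?_⟩)))
          rw [hq x hx, h]
        have hf' : ∀ x ∈ s₀, HasFDerivWithinAt f ((1 : ℝ →L[ℝ] ℝ).smulRight (q x)) s₀ x := by
          intro x hx
          have hD : HasDerivAt f (f' x) x := by
            by_contra h
            exact hx.2 (Or.inl (Or.inl (Or.inr (subset_toMeasurable _ _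
              (fun h' => h (h' (hsubIoo hx.1.2)))))))
          have : HasDerivWithinAt f (q x) s₀ x := hq x hx ▸ hD.hasDerivWithinAt
          exact this.hasFDerivWithinAt
        have hJ := lintegral_abs_det_fderiv_le_addHaar_image volume hs₀meas hf'
          (hinj.mono hs₀Ioo)
        have himg : volume (f '' s₀) = 0 := by
          apply measure_mono_null _ hs0
          rintro _ ⟨x, hx, rfl⟩
          rw [hfft x hx]
          exact hx.1.1
        rw [himg] at hJ
        simp only [ContinuousLinearMap.smulRight_one_eq_toSpanSingleton, ContinuousLinearMap.det_toSpanSingleton] at hJ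
        have hJ0 : ∫⁻ x in s₀, ENNReal.ofReal |q x| = 0 := le_antisymm hJ zero_le
        have hqmble : Measurable fun x => ENNReal.ofReal |q x| :=
          ENNReal.measurable_ofReal.comp hqmeas.measurable.abs
        have hae : ∀ᵐ x ∂(volume.restrict s₀), ENNReal.ofReal |q x| = 0 := by
          filter_upwards [(lintegral_eq_zero_iff hqmble).1 hJ0] with x hx using hx
        have hs₀0 : volume s₀ = 0 := by
          have h1 : volume.restrict s₀ {x | ENNReal.ofReal |q x| ≠ 0} = 0 := ae_iff.1 hae
          have h2 : s₀ ⊆ {x | ENNReal.ofReal |q x| ≠ 0} := by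
            intro x hx
            simp only [mem_setOf_eq, ne_eq, ENNReal.ofReal_eq_zero, not_le]
            exact abs_pos.2 (hqne x hx)
          refine le_antisymm ?_ zero_le
          calc volume s₀ = volume.restrict s₀ s₀ := (Measure.restrict_apply_self _ _).symm
            _ ≤ volume.restrict s₀ {x | ENNReal.ofReal |q x| ≠ 0} := measure_mono h2
            _ = 0 := h1
        -- now cover f ⁻¹' s ∩ Icc c d
        apply measure_mono_null (t := s₀ ∪ (Z1 ∪ Z2 ∪ Z3 ∪ Z4))
        · intro x hx
          by_cases hZ : x ∈ Z1 ∪ Z2 ∪ Z3 ∪ Z4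
          · exact Or.inr hZ
          · left
            refine ⟨⟨?_, hx.2⟩, hZ⟩
            have hxIoo : x ∈ Ioo a b := hsubIcc (Ioo_subset_Icc_self (hsubIoo hx.2))
            have : f x = ft x := by
              by_contra h
              exact hZ (Or.inl (Or.inl (Or.inl (subset_toMeasurable _ _ ⟨h, hxIoo⟩))))
            rw [mem_preimage, ← this]
            exact hx.1
        · apply measure_union_null hs₀0
          apply measure_union_null (measure_union_null (measure_union_null hZ1 hZ2) hZ3) hZ4
      · rw [Icc_eq_empty (not_le.2 hcd)]
        simp
    -- covering argument
    have hba : (0:ℝ) < b - a := by linarith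
    have hcover : f ⁻¹' s ∩ Ioo a b ⊆
        ⋃ n : ℕ, f ⁻¹' s ∩ Icc (a + (b - a) / (n + 2)) (b - (b - a) / (n + 2)) := by
      rintro x ⟨hxs, hxI⟩
      have hm : (0:ℝ) < min (x - a) (b - x) := lt_min (by linarith [hxI.1]) (by linarith [hxI.2])
      obtain ⟨n, hn⟩ := exists_nat_gt ((b - a) / min (x - a) (b - x))
      refine mem_iUnion.2 ⟨n, hxs, ?_, ?_⟩
      · have : (b - a) / (n + 2) < min (x - a) (b - x) := by
          rw [div_lt_iff₀ (by positivity)]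
          rw [div_lt_iff₀ hm] at hn
          nlinarith [hm, min_le_left (x - a) (b - x)]
        have := this.trans_le (min_le_left _ _)
        linarith
      · have : (b - a) / (n + 2) < min (x - a) (b - x) := by
          rw [div_lt_iff₀ (by positivity)]
          rw [div_lt_iff₀ hm] at hn
          nlinarith [hm]
        have := this.trans_le (min_le_right _ _)
        linarith
    apply measure_mono_null hcover
    apply measure_iUnion_null
    intro n
    have h2 : (0:ℝ) < (n:ℝ) + 2 := by positivity
    have hfrac : (b - a) / (n + 2) < b - a := by
      rw [div_lt_iff₀ h2]
      nlinarith
    have hfrac0 : (0:ℝ) < (b - a) / (n + 2) := by positivity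
    exact claim _ ⟨by linarith, by linarith⟩ _ ⟨by linarith, by linarith⟩
  refine ⟨g, fun t => (ν.rnDeriv volume t).toReal, hginv, ?_, ?_⟩
  · rintro u ⟨x, hx, rfl⟩ v ⟨y, hy, rfl⟩ huv
    rw [hginv x hx, hginv y hy]
    rcases lt_trichotomy x y with h | h | h
    · exact h
    · exact absurd (h ▸ huv) (lt_irrefl _)
    · exact absurd huv (not_lt.2 (hmono hy hx h).le)
  · rintro u ⟨x, hx, rfl⟩ v ⟨y, hy, rfl⟩ huv
    have hxy : x ≤ y := by
      by_contra h
      exact absurd (hmono hy hx (not_le.1 h)) (not_lt.2 huv)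
    have hrnmeas : Measurable (ν.rnDeriv volume) := Measure.measurable_rnDeriv ν volume
    have hIoc : ν (Ioc (f x) (f y)) = ENNReal.ofReal (y - x) := by
      rw [hνapp _ measurableSet_Ioc]
      have : f ⁻¹' Ioc (f x) (f y) ∩ Ioo a b = Ioc x y := by
        ext z
        simp only [mem_inter_iff, mem_preimage, mem_Ioc, mem_Ioo]
        constructor
        · rintro ⟨⟨h1, h2⟩, hz⟩
          exact ⟨(hmono.lt_iff_lt hx hz).1 h1, (hmono.le_iff_le hz hy).1 h2⟩
        · rintro ⟨h1, h2⟩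
          have hz : z ∈ Ioo a b := ⟨hx.1.trans h1, lt_of_le_of_lt h2 hy.2⟩
          exact ⟨⟨(hmono.lt_iff_lt hx hz).2 h1, (hmono.le_iff_le hz hy).2 h2⟩, hz⟩
      rw [this, Real.volume_Ioc]
    constructor
    · apply integrable_toReal_of_lintegral_ne_top (hrnmeas.aemeasurable.restrict)
      rw [Measure.setLIntegral_rnDeriv hac]
      exact (measure_lt_top ν _).ne
    · rw [hginv x hx, hginv y hy, intervalIntegral.integral_of_le huv]
      rw [integral_toReal (hrnmeas.aemeasurable.restrict)
        (ae_restrict_of_ae (Measure.rnDeriv_lt_top ν volume)),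
        Measure.setLIntegral_rnDeriv hac, hIoc, ENNReal.toReal_ofReal (by linarith)]
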